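/- Let Ã(0), …, Ã(T) ∈ ℝ^{n×n} be entrywise nonnegative, let the entries of K̃(k;·) be nonnegative posynomials of θ ∈ ℝ^m_{>0}, let x(0) ∈ ℝ^n be entrywise nonnegative, let ℓ(k) ∈ ℝ^n be entrywise positive for k = 1, …, T+1, let ε > 0, let L : ℝ^m_{>0} → ℝ be a posynomial, and let L̄ > 0. Assume x(k;exp[z])^⊤ℓ(k) > 0 for all z ∈ ℝ^m and 1 ≤ k ≤ T+1, where x(k;θ) = (Ã(k−1)+K̃(k−1;θ))⋯(Ã(0)+K̃(0;θ))x(0). Then the feasible region of the log-transformed budget-constrained problem, { z ∈ ℝ^m : log(x(k;exp[z])^⊤ℓ(k)) < log ε for all 1 ≤ k ≤ T+1, and log L(exp[z]) ≤ log L̄ }, is a convex subset of ℝ^m. -/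
import Mathlib


/-- A nonnegative posynomial on the positive orthant: a finite sum of monomials
with nonnegative coefficients and real exponents (possibly the zero function). -/
def IsNonnegPosynomial (m : ℕ) (f : (Fin m → ℝ) → ℝ) : Prop :=
  ∃ (N : ℕ) (c : Fin N → ℝ) (a : Fin N → Fin m → ℝ),
    (∀ j, 0 ≤ c j) ∧
    ∀ v : Fin m → ℝ, (∀ i, 0 < v i) → f v = ∑ j, c j * ∏ i, (v i) ^ (a j i)

/-- A posynomial on the positive orthant: a finite nonempty sum of monomials
with positive coefficients and real exponents. -/
def IsPosynomial (m : ℕ) (f : (Fin m → ℝ) → ℝ) : Prop :=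
  ∃ N : ℕ, 0 < N ∧ ∃ (c : Fin N → ℝ) (a : Fin N → Fin m → ℝ),
    (∀ j, 0 < c j) ∧
    ∀ v : Fin m → ℝ, (∀ i, 0 < v i) → f v = ∑ j, c j * ∏ i, (v i) ^ (a j i)

/-- The state trajectory of the parametrized system
x(k+1;θ) = (Ã(k) + K̃(k;θ)) x(k;θ), x(0;θ) = x(0). -/
def paramTraj (n m : ℕ) (Atil : ℕ → Matrix (Fin n) (Fin n) ℝ)
    (Ktil : ℕ → (Fin m → ℝ) → Matrix (Fin n) (Fin n) ℝ)
    (x0 : Fin n → ℝ) : ℕ → (Fin m → ℝ) → Fin n → ℝ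
  | 0, _ => x0
  | k + 1, θ => (Atil k + Ktil k θ).mulVec (paramTraj n m Atil Ktil x0 k θ)

lemma nnp_const (m : ℕ) (c : ℝ) (hc : 0 ≤ c) : IsNonnegPosynomial m (fun _ => c) :=
  ⟨1, fun _ => c, fun _ _ => 0, fun _ => hc, by intro v hv; simp⟩

lemma nnp_add {m : ℕ} {f g : (Fin m → ℝ) → ℝ} (hf : IsNonnegPosynomial m f)
    (hg : IsNonnegPosynomial m g) : IsNonnegPosynomial m (fun v => f v + g v) := by
  obtain ⟨N, c, a, hc, hfe⟩ := hf
  obtain ⟨N', d, b, hd, hge⟩ := hg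
  refine ⟨N + N', Fin.append c d, Fin.append a b, ?_, ?_⟩
  · intro j
    induction j using Fin.addCases with
    | left j => simpa using hc j
    | right j => simpa using hd j
  · intro v hv
    show f v + g v = _
    rw [hfe v hv, hge v hv, Fin.sum_univ_add]
    simp [Fin.append_left, Fin.append_right]

lemma nnp_mul {m : ℕ} {f g : (Fin m → ℝ) → ℝ} (hf : IsNonnegPosynomial m f)
    (hg : IsNonnegPosynomial m g) : IsNonnegPosynomial m (fun v => f v * g v) := by
  obtain ⟨N, c, a, hc, hfe⟩ := hf
  obtain ⟨N', d, b, hd, hge⟩ := hg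
  refine ⟨N * N', fun p => c (finProdFinEquiv.symm p).1 * d (finProdFinEquiv.symm p).2,
    fun p i => a (finProdFinEquiv.symm p).1 i + b (finProdFinEquiv.symm p).2 i,
    fun p => mul_nonneg (hc _) (hd _), ?_⟩
  intro v hv
  show f v * g v = _
  rw [hfe v hv, hge v hv, Finset.sum_mul_sum]
  beta_reduce
  have key := Fintype.sum_equiv (finProdFinEquiv (m := N) (n := N'))
    (fun p : Fin N × Fin N' =>
      c p.1 * d p.2 * ∏ i, v i ^ (a p.1 i + b p.2 i))
    (fun j : Fin (N * N') =>
      c (finProdFinEquiv.symm j).1 * d (finProdFinEquiv.symm j).2 *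
        ∏ i, v i ^ (a (finProdFinEquiv.symm j).1 i + b (finProdFinEquiv.symm j).2 i))
    (by intro p; simp)
  rw [← key, Fintype.sum_prod_type]
  refine Finset.sum_congr rfl fun j _ => Finset.sum_congr rfl fun k _ => ?_
  have : ∀ i, (v i) ^ (a j i + b k i) = (v i) ^ (a j i) * (v i) ^ (b k i) :=
    fun i => Real.rpow_add (hv i) _ _
  rw [Finset.prod_congr rfl fun i _ => this i, Finset.prod_mul_distrib]
  ring

lemma nnp_sum {m : ℕ} {ι : Type*} (s : Finset ι) (f : ι → (Fin m → ℝ) → ℝ)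
    (h : ∀ j ∈ s, IsNonnegPosynomial m (f j)) :
    IsNonnegPosynomial m (fun v => ∑ j ∈ s, f j v) := by
  classical
  induction s using Finset.induction_on with
  | empty => simpa using nnp_const m 0 le_rfl
  | @insert x s hx ih =>
    simp only [Finset.sum_insert hx]
    exact nnp_add (h x (Finset.mem_insert_self x s))
      (ih fun j hj => h j (Finset.mem_insert_of_mem hj))

lemma traj_nnp (n m T : ℕ) (Atil : ℕ → Matrix (Fin n) (Fin n) ℝ)
    (Ktil : ℕ → (Fin m → ℝ) → Matrix (Fin n) (Fin n) ℝ)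
    (hA : ∀ k ≤ T, ∀ i j, 0 ≤ Atil k i j)
    (hK : ∀ k ≤ T, ∀ i j, IsNonnegPosynomial m (fun θ => Ktil k θ i j))
    (x0 : Fin n → ℝ) (hx0 : ∀ i, 0 ≤ x0 i) :
    ∀ k ≤ T + 1, ∀ i, IsNonnegPosynomial m (fun θ => paramTraj n m Atil Ktil x0 k θ i) := by
  intro k
  induction k with
  | zero => intro _ i; exact nnp_const m (x0 i) (hx0 i)
  | succ k ih =>
    intro hk i
    have hkT : k ≤ T := by omega
    have : (fun θ => paramTraj n m Atil Ktil x0 (k + 1) θ i)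
        = fun θ => ∑ j, (Atil k i j + Ktil k θ i j) * paramTraj n m Atil Ktil x0 k θ j := by
      funext θ
      simp [paramTraj, Matrix.mulVec, dotProduct, Matrix.add_apply]
    rw [this]
    refine nnp_sum Finset.univ _ fun j _ => nnp_mul (nnp_add ?_ (hK k hkT i j))
      (ih (by omega) j)
    exact nnp_const m (Atil k i j) (hA k hkT i j)

lemma log_comp_exp_convex {m : ℕ} {f : (Fin m → ℝ) → ℝ}
    (hf : IsNonnegPosynomial m f)
    (hpos : ∀ z : Fin m → ℝ, 0 < f (fun i => Real.exp (z i)))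
    (x y : Fin m → ℝ) (t s : ℝ) (ht : 0 ≤ t) (hs : 0 ≤ s) (hts : t + s = 1) :
    Real.log (f (fun i => Real.exp ((t • x + s • y) i)))
      ≤ t * Real.log (f (fun i => Real.exp (x i)))
        + s * Real.log (f (fun i => Real.exp (y i))) := by
  obtain ⟨N, c, a, hc, hfe⟩ := hf
  -- rewrite f ∘ exp as sum of exponentials of linear forms
  have hFe : ∀ z : Fin m → ℝ,
      f (fun i => Real.exp (z i)) = ∑ j, c j * Real.exp (∑ i, a j i * z i) := by
    intro z
    rw [hfe _ (fun i => Real.exp_pos _)]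
    refine Finset.sum_congr rfl fun j _ => ?_
    congr 1
    rw [Real.exp_sum]
    refine Finset.prod_congr rfl fun i _ => ?_
    rw [Real.rpow_def_of_pos (Real.exp_pos _), Real.log_exp, mul_comm]
  set u : Fin N → ℝ := fun j => c j * Real.exp (∑ i, a j i * x i) with hu
  set w : Fin N → ℝ := fun j => c j * Real.exp (∑ i, a j i * y i) with hw
  have hun : ∀ j, 0 ≤ u j := fun j => mul_nonneg (hc j) (Real.exp_pos _).le
  have hwn : ∀ j, 0 ≤ w j := fun j => mul_nonneg (hc j) (Real.exp_pos _).le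
  set P := f (fun i => Real.exp (x i)) with hP
  set Q := f (fun i => Real.exp (y i)) with hQ
  have hPp : 0 < P := hpos x
  have hQp : 0 < Q := hpos y
  have hPu : P = ∑ j, u j := hFe x
  have hQw : Q = ∑ j, w j := hFe y
  -- termwise factorization
  have hterm : ∀ j : Fin N,
      c j * Real.exp (∑ i, a j i * ((t • x + s • y) i)) = u j ^ t * w j ^ s := by
    intro j
    have hlin : ∑ i, a j i * ((t • x + s • y) i)
        = t * (∑ i, a j i * x i) + s * (∑ i, a j i * y i) := by
      rw [Finset.mul_sum, Finset.mul_sum, ← Finset.sum_add_distrib]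
      refine Finset.sum_congr rfl fun i _ => ?_
      simp [Pi.add_apply, Pi.smul_apply, smul_eq_mul]; ring
    rw [hlin, Real.exp_add, hu, hw]
    rw [Real.mul_rpow (hc j) (Real.exp_pos _).le, Real.mul_rpow (hc j) (Real.exp_pos _).le]
    have hcj : c j = c j ^ t * c j ^ s := by
      rw [← Real.rpow_add' (hc j) (by rw [hts]; norm_num), hts, Real.rpow_one]
    have he1 : Real.exp (t * ∑ i, a j i * x i) = Real.exp (∑ i, a j i * x i) ^ t := by
      rw [Real.rpow_def_of_pos (Real.exp_pos _), Real.log_exp, mul_comm]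
    have he2 : Real.exp (s * ∑ i, a j i * y i) = Real.exp (∑ i, a j i * y i) ^ s := by
      rw [Real.rpow_def_of_pos (Real.exp_pos _), Real.log_exp, mul_comm]
    rw [he1, he2]; nth_rewrite 1 [hcj]; ring
  -- key inequality via weighted AM-GM
  have hkey : f (fun i => Real.exp ((t • x + s • y) i)) ≤ P ^ t * Q ^ s := by
    rw [hFe]
    calc ∑ j, c j * Real.exp (∑ i, a j i * ((t • x + s • y) i))
        = ∑ j, u j ^ t * w j ^ s := Finset.sum_congr rfl fun j _ => hterm j
      _ ≤ ∑ j, (P ^ t * Q ^ s) * (t * (u j / P) + s * (w j / Q)) := by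
          refine Finset.sum_le_sum fun j _ => ?_
          have hgm := Real.geom_mean_le_arith_mean2_weighted ht hs
            (div_nonneg (hun j) hPp.le) (div_nonneg (hwn j) hQp.le) hts
          have heq : u j ^ t * w j ^ s
              = (P ^ t * Q ^ s) * ((u j / P) ^ t * (w j / Q) ^ s) := by
            rw [Real.div_rpow (hun j) hPp.le, Real.div_rpow (hwn j) hQp.le]
            field_simp
          rw [heq]
          exact mul_le_mul_of_nonneg_left hgm
            (mul_nonneg (Real.rpow_nonneg hPp.le _) (Real.rpow_nonneg hQp.le _))
      _ = (P ^ t * Q ^ s) * ∑ j, (t * (u j / P) + s * (w j / Q)) := by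
          rw [Finset.mul_sum]
      _ = P ^ t * Q ^ s := by
          rw [Finset.sum_add_distrib]
          simp only [div_eq_mul_inv, ← mul_assoc]
          rw [← Finset.sum_mul, ← Finset.sum_mul, ← Finset.mul_sum, ← Finset.mul_sum,
            ← hPu, ← hQw, mul_assoc t, mul_assoc s,
            mul_inv_cancel₀ hPp.ne', mul_inv_cancel₀ hQp.ne']
          rw [mul_one, mul_one, hts, mul_one]
  calc Real.log (f (fun i => Real.exp ((t • x + s • y) i)))
      ≤ Real.log (P ^ t * Q ^ s) := Real.log_le_log (hpos _) hkey
    _ = t * Real.log P + s * Real.log Q := by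
        rw [Real.log_mul (Real.rpow_pos_of_pos hPp _).ne' (Real.rpow_pos_of_pos hQp _).ne',
          Real.log_rpow hPp, Real.log_rpow hQp]

lemma posyn_nnp {m : ℕ} {L : (Fin m → ℝ) → ℝ} (hL : IsPosynomial m L) :
    IsNonnegPosynomial m L := by
  obtain ⟨N, _, c, a, hc, he⟩ := hL
  exact ⟨N, c, a, fun j => (hc j).le, he⟩

lemma posyn_pos {m : ℕ} {L : (Fin m → ℝ) → ℝ} (hL : IsPosynomial m L)
    (z : Fin m → ℝ) : 0 < L (fun i => Real.exp (z i)) := by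
  obtain ⟨N, hN, c, a, hc, he⟩ := hL
  rw [he _ (fun i => Real.exp_pos _)]
  have : Nonempty (Fin N) := ⟨⟨0, hN⟩⟩
  refine Finset.sum_pos (fun j _ => mul_pos (hc j) ?_) Finset.univ_nonempty
  exact Finset.prod_pos fun i _ => Real.rpow_pos_of_pos (Real.exp_pos _) _

/-- The feasible region of the log-transformed budget-constrained
finite-time control problem,
{ z : log(x(k;exp[z])^⊤ℓ(k)) < log ε for all 1 ≤ k ≤ T+1, log L(exp[z]) ≤ log L̄ },
is a convex subset of ℝ^m. -/
theorem budget_constrained_feasible_region_convex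
    (n m T : ℕ) (Atil : ℕ → Matrix (Fin n) (Fin n) ℝ)
    (Ktil : ℕ → (Fin m → ℝ) → Matrix (Fin n) (Fin n) ℝ)
    (hA : ∀ k ≤ T, ∀ i j, 0 ≤ Atil k i j)
    (hK : ∀ k ≤ T, ∀ i j, IsNonnegPosynomial m (fun θ => Ktil k θ i j))
    (x0 : Fin n → ℝ) (hx0 : ∀ i, 0 ≤ x0 i)
    (ℓ : ℕ → Fin n → ℝ) (hℓ : ∀ k, 1 ≤ k → k ≤ T + 1 → ∀ i, 0 < ℓ k i)
    (ε : ℝ) (hε : 0 < ε)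
    (L : (Fin m → ℝ) → ℝ) (hL : IsPosynomial m L)
    (Lbar : ℝ) (hLbar : 0 < Lbar)
    (hpos : ∀ z : Fin m → ℝ, ∀ k, 1 ≤ k → k ≤ T + 1 →
      0 < ∑ i, paramTraj n m Atil Ktil x0 k (fun i => Real.exp (z i)) i * ℓ k i) :
    Convex ℝ
      { z : Fin m → ℝ |
        (∀ k, 1 ≤ k → k ≤ T + 1 →
          Real.log (∑ i, paramTraj n m Atil Ktil x0 k (fun i => Real.exp (z i)) i * ℓ k i)
            < Real.log ε) ∧
        Real.log (L (fun i => Real.exp (z i))) ≤ Real.log Lbar } := by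
  intro z1 hz1 z2 hz2 t s ht hs hts
  obtain ⟨h1, h1L⟩ := hz1
  obtain ⟨h2, h2L⟩ := hz2
  have combo_lt : ∀ A B C : ℝ, A < C → B < C → t * A + s * B < C := by
    intro A B C hAc hBc
    rcases ht.lt_or_eq with h | h
    · have h1' : t * A < t * C := mul_lt_mul_of_pos_left hAc h
      have h2' : s * B ≤ s * C := mul_le_mul_of_nonneg_left hBc.le hs
      calc t * A + s * B < t * C + s * C := by linarith
        _ = C := by rw [← add_mul, hts, one_mul]
    · have hs1 : s = 1 := by linarith
      simp [← h, hs1, hBc]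
  have combo_le : ∀ A B C : ℝ, A ≤ C → B ≤ C → t * A + s * B ≤ C := by
    intro A B C hAc hBc
    have h1' : t * A ≤ t * C := mul_le_mul_of_nonneg_left hAc ht
    have h2' : s * B ≤ s * C := mul_le_mul_of_nonneg_left hBc hs
    calc t * A + s * B ≤ t * C + s * C := by linarith
      _ = C := by rw [← add_mul, hts, one_mul]
  constructor
  · intro k hk1 hk2
    have gk : IsNonnegPosynomial m
        (fun θ => ∑ i, paramTraj n m Atil Ktil x0 k θ i * ℓ k i) :=
      nnp_sum Finset.univ _ fun i _ =>
        nnp_mul (traj_nnp n m T Atil Ktil hA hK x0 hx0 k hk2 i)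
          (nnp_const m (ℓ k i) (hℓ k hk1 hk2 i).le)
    have hck := log_comp_exp_convex gk (fun z => hpos z k hk1 hk2) z1 z2 t s ht hs hts
    exact lt_of_le_of_lt hck (combo_lt _ _ _ (h1 k hk1 hk2) (h2 k hk1 hk2))
  · have hck := log_comp_exp_convex (posyn_nnp hL) (posyn_pos hL) z1 z2 t s ht hs hts
    exact le_trans hck (combo_le _ _ _ h1L h2L)
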